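/- Let d ≥ 4, let e_1, …, e_d be the standard basis of ℝ^d, let p = (2/(d−1)) Σ_{i=1}^{d−1} e_i, and let λ be a real number with 1 < λ < (d−1)/2. Let P be the polytope with vertex set V = {0, e_1, …, e_d, p, e_d + λp}. Then the diameter of V in the relative norm ‖·‖_P is at most 1, ‖e_d − 0‖_P = 1, ‖p − 0‖_P = 1/λ, and consequently λ(V; ‖·‖_P) ≥ λ. -/

import Mathlib

open Pointwise

/-- `N` is a norm on the real vector space `E`. -/
def IsNorm {E : Type*} [AddCommGroup E] [Module ℝ E] (N : E → ℝ) : Prop :=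
  (∀ x, N x = 0 ↔ x = 0) ∧ (∀ (a : ℝ) (x : E), N (a • x) = |a| * N x) ∧
  (∀ x y, N (x + y) ≤ N x + N y)

/-- The segment `[x, y]` is an edge (a 1-dimensional face) of `P`. -/
def IsEdge {E : Type*} [AddCommGroup E] [Module ℝ E] (P : Set E) (x y : E) : Prop :=
  x ≠ y ∧ IsExtreme ℝ P (segment ℝ x y)

/-- The diameter of a set `P` with respect to the norm `N`. -/
noncomputable def polyDiam {E : Type*} [AddCommGroup E] (N : E → ℝ) (P : Set E) : ℝ :=
  sSup {r | ∃ x ∈ P, ∃ y ∈ P, N (x - y) = r}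

/-- The minimum pairwise distance of a finite set `V` with respect to the norm `N`. -/
noncomputable def minPairDist {E : Type*} [AddCommGroup E] (N : E → ℝ) (V : Finset E) : ℝ :=
  sInf {r | ∃ x ∈ V, ∃ y ∈ V, x ≠ y ∧ N (x - y) = r}

/-- The functional `λ(V; N) = diam(V) / min pairwise distance`. -/
noncomputable def lamV {E : Type*} [AddCommGroup E] (N : E → ℝ) (V : Finset E) : ℝ :=
  polyDiam N (V : Set E) / minPairDist N V

/-- `P` is subequilateral with respect to `N`: every edge has length the diameter of `P`. -/
def Subequilateral {E : Type*} [AddCommGroup E] [Module ℝ E] (N : E → ℝ) (P : Set E) : Prop :=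
  ∀ x y, IsEdge P x y → N (x - y) = polyDiam N P

/-- There are two parallel hyperplanes, one through `x` and one through `y`, such that `P`
lies in the closed slab bounded by them. -/
def InSlab {E : Type*} [AddCommGroup E] [Module ℝ E] (P : Set E) (x y : E) : Prop :=
  ∃ f : E →ₗ[ℝ] ℝ, f ≠ 0 ∧ ∀ z ∈ P, min (f x) (f y) ≤ f z ∧ f z ≤ max (f x) (f y)

/-- `P` is edge-antipodal. -/
def EdgeAntipodal {E : Type*} [AddCommGroup E] [Module ℝ E] (P : Set E) : Prop :=
  ∀ x y, IsEdge P x y → InSlab P x y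

/-- `P` is antipodal. -/
def Antipodal {E : Type*} [AddCommGroup E] [Module ℝ E] (P : Set E) : Prop :=
  ∀ x ∈ Set.extremePoints ℝ P, ∀ y ∈ Set.extremePoints ℝ P, x ≠ y → InSlab P x y

/-- The relative norm determined by `P`, i.e. the norm with unit ball `P - P`. -/
noncomputable def relNorm {E : Type*} [AddCommGroup E] [Module ℝ E] (P : Set E) : E → ℝ :=
  gauge (P - P)

lemma gauge_lower_bound' {E : Type*} [AddCommGroup E] [Module ℝ E] (s : Set E)
    (f : E →ₗ[ℝ] ℝ) (hf : ∀ w ∈ s, f w ≤ 1) {z : E} {t : ℝ} (ht : 0 < t)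
    (hz : z ∈ t • s) : f z ≤ gauge s z := by
  rw [gauge_def]
  refine le_csInf ⟨t, ⟨Set.mem_Ioi.mpr ht, hz⟩⟩ ?_
  rintro r ⟨hr, hrz⟩
  obtain ⟨w, hw, rfl⟩ := hrz
  rw [map_smul, smul_eq_mul]
  calc r * f w ≤ r * 1 := mul_le_mul_of_nonneg_left (hf w hw) (le_of_lt hr)
    _ = r := mul_one r

lemma gauge_pos_of_subset_ball' {E : Type*} [NormedAddCommGroup E] [NormedSpace ℝ E]
    (s : Set E) {r : ℝ} (hs : s ⊆ Metric.ball 0 r) {z : E} (hzs : z ∈ s) (hz : z ≠ 0) :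
    0 < gauge s z := by
  have hzr : ‖z‖ < r := by have := hs hzs; rwa [Metric.mem_ball, dist_zero_right] at this
  have hr : 0 < r := lt_of_le_of_lt (norm_nonneg z) hzr
  have key : ‖z‖ / r ≤ gauge s z := by
    rw [gauge_def]
    refine le_csInf ⟨1, ⟨Set.mem_Ioi.mpr one_pos, by simpa using hzs⟩⟩ ?_
    rintro a ⟨ha, hmem⟩
    obtain ⟨w, hw, rfl⟩ := hmem
    have hw' : ‖w‖ < r := by have := hs hw; rwa [Metric.mem_ball, dist_zero_right] at this
    have ha' : (0:ℝ) < a := ha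
    rw [norm_smul, Real.norm_eq_abs, abs_of_pos ha', div_le_iff₀ hr]
    nlinarith [norm_nonneg w]
  have : 0 < ‖z‖ / r := div_pos (norm_pos_iff.mpr hz) hr
  linarith


/-- Talata's example. For `d ≥ 4`, `p = (2/(d−1)) Σ_{i=1}^{d−1} e_i` and
`1 < l < (d−1)/2`, the polytope `P` with vertex set `V = {0, e_1, …, e_d, p, e_d + l·p}`
satisfies: the diameter of `V` in the relative norm `‖·‖_P` is at most `1`,
`‖e_d − 0‖_P = 1`, `‖p − 0‖_P = 1/l`, and consequently `λ(V; ‖·‖_P) ≥ l`. -/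
theorem talata_relNorm_example (d : ℕ) (hd : 4 ≤ d)
    (e : Fin d → (Fin d → ℝ)) (he : ∀ i, e i = Pi.single i 1)
    (p : Fin d → ℝ)
    (hp : p = (2 / ((d : ℝ) - 1)) • ∑ i ∈ Finset.univ.erase (⟨d - 1, by omega⟩ : Fin d), e i)
    (l : ℝ) (hl1 : 1 < l) (hl2 : l < ((d : ℝ) - 1) / 2)
    (V : Finset (Fin d → ℝ))
    (hV : (V : Set (Fin d → ℝ)) =
      {0} ∪ Set.range e ∪ {p, e ⟨d - 1, by omega⟩ + l • p})
    (P : Set (Fin d → ℝ)) (hP : P = convexHull ℝ (V : Set (Fin d → ℝ))) :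
    (∀ x ∈ V, ∀ y ∈ V, relNorm P (x - y) ≤ 1) ∧
      relNorm P (e ⟨d - 1, by omega⟩ - 0) = 1 ∧
      relNorm P (p - 0) = 1 / l ∧
      l ≤ lamV (relNorm P) V := by
  have hl0 : (0:ℝ) < l := lt_trans one_pos hl1
  have hdR : (0:ℝ) < (d:ℝ) - 1 := by
    have : (4:ℝ) ≤ (d:ℝ) := by exact_mod_cast hd
    linarith
  set last : Fin d := ⟨d - 1, by omega⟩ with hlast
  set q : Fin d → ℝ := e last + l • p with hq
  -- membership facts
  have hmemV : ∀ v : Fin d → ℝ, v ∈ V ↔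
      (v = 0 ∨ (∃ i, e i = v) ∨ v = p ∨ v = q) := by
    intro v
    rw [← Finset.mem_coe, hV]
    simp only [Set.mem_union, Set.mem_range, Set.mem_singleton_iff, Set.mem_insert_iff, hq]
    tauto
  have h0V : (0 : Fin d → ℝ) ∈ V := (hmemV 0).mpr (Or.inl rfl)
  have heV : ∀ i, e i ∈ V := fun i => (hmemV _).mpr (Or.inr (Or.inl ⟨i, rfl⟩))
  have hpV : p ∈ V := (hmemV p).mpr (Or.inr (Or.inr (Or.inl rfl)))
  have hqV : q ∈ V := (hmemV q).mpr (Or.inr (Or.inr (Or.inr rfl)))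
  have hVP : (V : Set (Fin d → ℝ)) ⊆ P := by rw [hP]; exact subset_convexHull ℝ _
  have hsub : ∀ x ∈ V, ∀ y ∈ V, x - y ∈ P - P := fun x hx y hy =>
    Set.sub_mem_sub (hVP hx) (hVP hy)
  -- Part 1
  have part1 : ∀ x ∈ V, ∀ y ∈ V, relNorm P (x - y) ≤ 1 := fun x hx y hy =>
    gauge_le_one_of_mem (hsub x hx y hy)
  -- coordinate computations
  have hcard : (Finset.univ.erase last).card = d - 1 := by
    rw [Finset.card_erase_of_mem (Finset.mem_univ _), Finset.card_univ, Fintype.card_fin]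
  -- functional f = projection onto last coordinate
  set f : (Fin d → ℝ) →ₗ[ℝ] ℝ := LinearMap.proj last with hf
  have hfe : ∀ i, f (e i) = if last = i then 1 else 0 := by
    intro i; rw [he]; simp [hf, LinearMap.proj_apply, Pi.single_apply]
  have hfp : f p = 0 := by
    rw [hp, map_smul, map_sum]
    have : ∀ i ∈ Finset.univ.erase last, f (e i) = 0 := by
      intro i hi
      rw [hfe]
      simp [Finset.ne_of_mem_erase hi, (Finset.ne_of_mem_erase hi).symm]
    rw [Finset.sum_congr rfl this]
    simp
  have hflast : f (e last) = 1 := by rw [hfe]; simp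
  have hfq : f q = 1 := by rw [hq, map_add, map_smul, hfp, hflast]; simp
  -- bounds of a functional on P - P from bounds on V
  have bound_PP : ∀ g : (Fin d → ℝ) →ₗ[ℝ] ℝ,
      (∀ v ∈ (V : Set (Fin d → ℝ)), 0 ≤ g v ∧ g v ≤ 1) → ∀ w ∈ P - P, g w ≤ 1 := by
    intro g hg w hw
    obtain ⟨a, ha, b, hb, rfl⟩ := hw
    have hP' : ∀ u ∈ P, 0 ≤ g u ∧ g u ≤ 1 := by
      rw [hP]
      refine fun u hu => convexHull_min (fun v hv => hg v hv)
        ((convex_halfSpace_ge g.isLinear 0).inter (convex_halfSpace_le g.isLinear 1)) hu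
    obtain ⟨ha1, ha2⟩ := hP' a ha
    obtain ⟨hb1, hb2⟩ := hP' b hb
    rw [map_sub]; linarith
  have hfV : ∀ v ∈ (V : Set (Fin d → ℝ)), 0 ≤ f v ∧ f v ≤ 1 := by
    intro v hv
    rcases (hmemV v).mp (Finset.mem_coe.mp hv) with rfl | ⟨i, rfl⟩ | rfl | rfl
    · simp
    · rw [hfe]; split_ifs <;> norm_num
    · rw [hfp]; norm_num
    · rw [hfq]; norm_num
  -- Part 2
  have part2 : relNorm P (e last - 0) = 1 := by
    rw [sub_zero]
    refine le_antisymm ?_ ?_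
    · have := part1 (e last) (heV last) 0 h0V
      rwa [sub_zero] at this
    · have hmem : e last ∈ (1:ℝ) • (P - P) := by
        rw [one_smul]
        have := hsub (e last) (heV last) 0 h0V
        rwa [sub_zero] at this
      have := gauge_lower_bound' (P - P) f (bound_PP f hfV) one_pos hmem
      rw [hflast] at this
      exact this
  -- functional g
  set g : (Fin d → ℝ) →ₗ[ℝ] ℝ :=
    ∑ i ∈ Finset.univ.erase last, (1/(2*l)) • LinearMap.proj i with hgdef
  have hgapp : ∀ x : Fin d → ℝ, g x = ∑ i ∈ Finset.univ.erase last, (1/(2*l)) * x i := by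
    intro x
    rw [hgdef]
    simp [LinearMap.sum_apply, LinearMap.smul_apply, LinearMap.proj_apply, smul_eq_mul]
  have hge : ∀ j, g (e j) = if j ∈ Finset.univ.erase last then 1/(2*l) else 0 := by
    intro j
    rw [hgapp, he]
    have : ∀ i ∈ Finset.univ.erase last,
        (1/(2*l)) * (Pi.single j 1 : Fin d → ℝ) i = if i = j then 1/(2*l) else 0 := by
      intro i _
      rw [Pi.single_apply]
      split_ifs <;> ring
    rw [Finset.sum_congr rfl this, Finset.sum_ite_eq' (Finset.univ.erase last) j
      (fun _ => 1/(2*l))]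
  have hglast : g (e last) = 0 := by
    rw [hge]; simp
  have hgp : g p = 1 / l := by
    rw [hp, map_smul, map_sum]
    have : ∀ i ∈ Finset.univ.erase last, g (e i) = 1/(2*l) := by
      intro i hi; rw [hge, if_pos hi]
    rw [Finset.sum_congr rfl this, Finset.sum_const, hcard, smul_eq_mul, nsmul_eq_mul]
    have hcast : ((d - 1 : ℕ) : ℝ) = (d:ℝ) - 1 := by
      have : 1 ≤ d := by omega
      push_cast [Nat.cast_sub this]
      ring
    rw [hcast]
    field_simp
  have hgq : g q = 1 := by
    rw [hq, map_add, map_smul, hglast, hgp, smul_eq_mul]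
    field_simp
    norm_num
  have hgV : ∀ v ∈ (V : Set (Fin d → ℝ)), 0 ≤ g v ∧ g v ≤ 1 := by
    intro v hv
    rcases (hmemV v).mp (Finset.mem_coe.mp hv) with rfl | ⟨i, rfl⟩ | rfl | rfl
    · simp
    · rw [hge]; split_ifs
      · constructor
        · positivity
        · rw [div_le_one (by linarith)]; linarith
      · norm_num
    · rw [hgp]
      constructor
      · positivity
      · rw [div_le_one hl0]; linarith
    · rw [hgq]; norm_num
  -- Part 3
  have hlp_mem : l • p ∈ P - P := by
    have := hsub q hqV (e last) (heV last)
    rwa [hq, add_sub_cancel_left] at this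
  have hp_mem : p ∈ (1/l) • (P - P) := by
    refine Set.mem_smul_set.mpr ⟨l • p, hlp_mem, ?_⟩
    rw [smul_smul]
    rw [one_div, inv_mul_cancel₀ (ne_of_gt hl0), one_smul]
  have part3 : relNorm P (p - 0) = 1 / l := by
    rw [sub_zero]
    refine le_antisymm ?_ ?_
    · exact gauge_le_of_mem (by positivity) hp_mem
    · have := gauge_lower_bound' (P - P) g (bound_PP g hgV) (by positivity) hp_mem
      rwa [hgp] at this
  refine ⟨part1, part2, part3, ?_⟩
  -- Part 4
  set N : (Fin d → ℝ) → ℝ := relNorm P with hN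
  have hp0 : p ≠ 0 := by
    intro h
    rw [h, map_zero] at hgp
    have : (0:ℝ) < 1 / l := by positivity
    rw [← hgp] at this
    exact lt_irrefl 0 this
  -- polyDiam = 1
  have hdiam : polyDiam N (V : Set (Fin d → ℝ)) = 1 := by
    unfold polyDiam
    have hub : ∀ r ∈ {r | ∃ x ∈ (V : Set (Fin d → ℝ)), ∃ y ∈ (V : Set (Fin d → ℝ)),
        N (x - y) = r}, r ≤ 1 := by
      rintro r ⟨x, hx, y, hy, rfl⟩
      exact part1 x (Finset.mem_coe.mp hx) y (Finset.mem_coe.mp hy)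
    have hmem1 : (1:ℝ) ∈ {r | ∃ x ∈ (V : Set (Fin d → ℝ)), ∃ y ∈ (V : Set (Fin d → ℝ)),
        N (x - y) = r} := ⟨e last, heV last, 0, h0V, part2⟩
    exact le_antisymm (csSup_le ⟨1, hmem1⟩ hub) (le_csSup ⟨1, hub⟩ hmem1)
  -- minPairDist
  set S2 : Set ℝ := {r | ∃ x ∈ V, ∃ y ∈ V, x ≠ y ∧ N (x - y) = r} with hS2
  have hmem2 : (1/l) ∈ S2 := ⟨p, hpV, 0, h0V, hp0, part3⟩
  have hbdd : ∀ r ∈ S2, 0 ≤ r := by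
    rintro r ⟨x, hx, y, hy, hxy, rfl⟩
    exact gauge_nonneg _
  have hmin_le : minPairDist N V ≤ 1 / l := by
    unfold minPairDist
    exact csInf_le ⟨0, hbdd⟩ hmem2
  -- boundedness
  have hbound : Bornology.IsBounded (P - P) := by
    have hVb : Bornology.IsBounded (V : Set (Fin d → ℝ)) := V.finite_toSet.isBounded
    have hPb : Bornology.IsBounded P := by
      rw [hP]; exact isBounded_convexHull.mpr hVb
    exact hPb.sub hPb
  obtain ⟨r, hr0, hball⟩ := hbound.subset_ball_lt 0 0
  have hfin : S2.Finite := by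
    have : S2 ⊆ (fun q : (Fin d → ℝ) × (Fin d → ℝ) => N (q.1 - q.2)) ''
        ((V : Set (Fin d → ℝ)) ×ˢ (V : Set (Fin d → ℝ))) := by
      rintro s ⟨x, hx, y, hy, hxy, rfl⟩
      exact ⟨(x, y), ⟨hx, hy⟩, rfl⟩
    exact Set.Finite.subset ((V.finite_toSet.prod V.finite_toSet).image _) this
  have hmin_pos : 0 < minPairDist N V := by
    have hmem := Set.Nonempty.csInf_mem ⟨1/l, hmem2⟩ hfin
    obtain ⟨x, hx, y, hy, hxy, heq⟩ := hmem
    unfold minPairDist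
    rw [← heq]
    exact gauge_pos_of_subset_ball' (P - P) hball (hsub x hx y hy) (sub_ne_zero.mpr hxy)
  -- conclude
  unfold lamV
  rw [hdiam]
  rw [le_div_iff₀ hmin_pos]
  calc l * minPairDist N V ≤ l * (1/l) := mul_le_mul_of_nonneg_left hmin_le (le_of_lt hl0)
    _ = 1 := by field_simp
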